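/- Let $d \ge 0$ and let $v:(0,\infty)\to\mathbb{R}$ be differentiable with $x v'(x) \to 0$ as $x\to\infty$. Then $\lim_{\mu \downarrow 0}\; \mu^{d+1}\, e^{v(1/\mu)} \sum_{k=1}^{\infty} k^{d} e^{-\mu k - v(k)} = \Gamma(d+1)$. -/

import Mathlib

open Filter Set MeasureTheory

private lemma exp_half_abs_log_le {x : ℝ} (hx : 0 < x) :
    Real.exp (2⁻¹ * |Real.log x|) ≤ x ^ ((2:ℝ)⁻¹) + x ^ (-(2:ℝ)⁻¹) := by
  have h1 : x ^ ((2:ℝ)⁻¹) = Real.exp (2⁻¹ * Real.log x) := by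
    rw [Real.rpow_def_of_pos hx, mul_comm]
  have h2 : x ^ (-(2:ℝ)⁻¹) = Real.exp (-(2⁻¹ * Real.log x)) := by
    rw [Real.rpow_def_of_pos hx, mul_comm]; ring_nf
  rcases abs_cases (Real.log x) with ⟨h, _⟩ | ⟨h, _⟩
  · rw [h, h1, h2]
    nlinarith [Real.exp_pos (-(2⁻¹ * Real.log x))]
  · rw [h, h1, h2, mul_neg]
    nlinarith [Real.exp_pos (2⁻¹ * Real.log x)]

private lemma add_one_rpow_le {t s : ℝ} (ht : 0 ≤ t) (hs : 0 ≤ s) :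
    (t + 1) ^ s ≤ 2 ^ s * (t ^ s + 1) := by
  have h2 : (0:ℝ) ≤ 2 ^ s := Real.rpow_nonneg (by norm_num) s
  have h3 : (0:ℝ) ≤ t ^ s := Real.rpow_nonneg ht s
  rcases le_total t 1 with h | h
  · have := Real.rpow_le_rpow (by linarith) (show t + 1 ≤ 2 by linarith) hs
    nlinarith
  · have := Real.rpow_le_rpow (by linarith) (show t + 1 ≤ 2 * t by linarith) hs
    rw [Real.mul_rpow (by norm_num) ht] at this
    nlinarith
open Filter Set MeasureTheory

private lemma v_reg (v : ℝ → ℝ)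
    (hdiff : ∀ y ∈ Set.Ioi (0:ℝ), DifferentiableAt ℝ v y)
    (hv : Tendsto (fun y => y * deriv v y) atTop (nhds 0)) {ε : ℝ} (hε : 0 < ε) :
    ∃ A : ℝ, 1 ≤ A ∧ ∀ x y : ℝ, A ≤ x → x ≤ y →
      |v y - v x| ≤ ε * (Real.log y - Real.log x) := by
  have h := (Metric.tendsto_nhds.mp hv) ε hε
  rw [eventually_atTop] at h
  obtain ⟨A₀, hA₀⟩ := h
  refine ⟨max A₀ 1, le_max_right _ _, ?_⟩
  set A := max A₀ 1 with hA
  have hA1 : (1:ℝ) ≤ A := le_max_right _ _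
  have hAbd : ∀ s : ℝ, A ≤ s → |s * deriv v s| ≤ ε := by
    intro s hs
    have := hA₀ s (le_trans (le_max_left _ _) hs)
    rw [Real.dist_eq, sub_zero] at this
    exact this.le
  have mono : ∀ w : ℝ → ℝ, (∀ y ∈ Ioi (0:ℝ), DifferentiableAt ℝ w y) →
      (∀ s : ℝ, A < s → 0 ≤ ε * s⁻¹ + deriv w s) →
      MonotoneOn (fun x => ε * Real.log x + w x) (Ici A) := by
    intro w hw hw'
    have hdiffw : ∀ s : ℝ, A < s → DifferentiableAt ℝ (fun x => ε * Real.log x + w x) s := by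
      intro s hs
      have hs0 : (0:ℝ) < s := lt_of_lt_of_le (lt_of_lt_of_le zero_lt_one hA1) hs.le
      exact ((Real.differentiableAt_log hs0.ne').const_mul ε).add (hw s hs0)
    refine monotoneOn_of_deriv_nonneg (convex_Ici A) ?_ ?_ ?_
    · intro x hx
      have hx0 : (0:ℝ) < x := lt_of_lt_of_le (lt_of_lt_of_le zero_lt_one hA1) hx
      exact (((Real.differentiableAt_log hx0.ne').const_mul ε).add
        (hw x hx0)).continuousAt.continuousWithinAt
    · rw [interior_Ici]
      intro x hx
      exact (hdiffw x hx).differentiableWithinAt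
    · rw [interior_Ici]
      intro x hx
      have hx0 : (0:ℝ) < x := lt_of_lt_of_le (lt_of_lt_of_le zero_lt_one hA1) (le_of_lt hx)
      have : deriv (fun x => ε * Real.log x + w x) x = ε * x⁻¹ + deriv w x := by
        rw [deriv_fun_add ((Real.differentiableAt_log hx0.ne').const_mul ε) (hw x hx0),
          deriv_const_mul _ (Real.differentiableAt_log hx0.ne'), Real.deriv_log]
      rw [this]
      exact hw' x hx
  have m1 := mono v hdiff (by
    intro s hs
    have hs0 : (0:ℝ) < s := lt_of_lt_of_le (lt_of_lt_of_le zero_lt_one hA1) hs.le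
    have hb := hAbd s hs.le
    have h1 : -ε ≤ s * deriv v s := neg_le_of_abs_le hb
    have : 0 ≤ ε + s * deriv v s := by linarith
    have := div_nonneg this hs0.le
    calc (0:ℝ) ≤ (ε + s * deriv v s) / s := this
      _ = ε * s⁻¹ + deriv v s := by field_simp)
  have m2 := mono (fun x => -v x) (fun y hy => (hdiff y hy).neg) (by
    intro s hs
    have hs0 : (0:ℝ) < s := lt_of_lt_of_le (lt_of_lt_of_le zero_lt_one hA1) hs.le
    have hb := hAbd s hs.le
    have h1 : s * deriv v s ≤ ε := le_of_abs_le hb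
    have hder : deriv (fun x => -v x) s = -deriv v s := by
      rw [deriv.fun_neg]
    rw [hder]
    have : 0 ≤ ε - s * deriv v s := by linarith
    have := div_nonneg this hs0.le
    calc (0:ℝ) ≤ (ε - s * deriv v s) / s := this
      _ = ε * s⁻¹ + -deriv v s := by field_simp; ring)
  intro x y hx hxy
  have hxI : x ∈ Ici A := hx
  have hyI : y ∈ Ici A := le_trans hx hxy
  have e1 := m1 hxI hyI hxy
  have e2 := m2 hxI hyI hxy
  simp only at e1 e2
  rw [abs_le]
  constructor <;> nlinarith [e1, e2]

private lemma vdiff_bound (v : ℝ → ℝ) {c A μ n : ℝ} (hc : 0 ≤ c) (hμ : 0 < μ) (hn : 0 < n)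
    (hAv : ∀ x y : ℝ, A ≤ x → x ≤ y → |v y - v x| ≤ c * (Real.log y - Real.log x))
    (h1 : A ≤ 1/μ) (h2 : A ≤ n) :
    |v (1/μ) - v n| ≤ c * |Real.log (μ * n)| := by
  have hlogx : Real.log (μ * n) = Real.log n - Real.log (1/μ) := by
    rw [Real.log_mul hμ.ne' hn.ne', one_div, Real.log_inv]; ring
  rcases le_total (1/μ) n with h | h
  · have hb := hAv (1/μ) n h1 h
    rw [abs_sub_comm]
    have h3 := le_abs_self (Real.log (μ * n))
    calc |v n - v (1/μ)| ≤ c * (Real.log n - Real.log (1/μ)) := hb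
      _ = c * Real.log (μ * n) := by rw [hlogx]
      _ ≤ c * |Real.log (μ * n)| := by nlinarith
  · have hb := hAv n (1/μ) h2 h
    have h3 := neg_abs_le (Real.log (μ * n))
    calc |v (1/μ) - v n| ≤ c * (Real.log (1/μ) - Real.log n) := hb
      _ = c * (-Real.log (μ * n)) := by rw [hlogx]; ring
      _ ≤ c * |Real.log (μ * n)| := by nlinarith

set_option maxHeartbeats 3200000 in
/-- Let `d ≥ 0` and `v` differentiable on `(0,∞)` with `x v'(x) → 0`. Then
`μ^{d+1} e^{v(1/μ)} ∑_{k ≥ 1} k^d e^{-μ k - v(k)} → Γ(d+1)` as `μ ↓ 0`. -/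
theorem gamma_limit_of_expected_mass
    (d : ℝ) (hd : 0 ≤ d)
    (v : ℝ → ℝ)
    (hdiff : ∀ y ∈ Set.Ioi (0:ℝ), DifferentiableAt ℝ v y)
    (hv : Tendsto (fun y => y * deriv v y) atTop (nhds 0)) :
    Tendsto
      (fun μ : ℝ => μ ^ (d + 1) * Real.exp (v (1 / μ)) *
        ∑' k : ℕ, ((k : ℝ) + 1) ^ d *
          Real.exp (-(μ * ((k : ℝ) + 1)) - v ((k : ℝ) + 1)))
      (nhdsWithin 0 (Set.Ioi 0))
      (nhds (Real.Gamma (d + 1))) := by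
  obtain ⟨A, hA1, hAv⟩ := v_reg v hdiff hv (show (0:ℝ) < 2⁻¹ by norm_num)
  have hA0 : (0:ℝ) < A := lt_of_lt_of_le zero_lt_one hA1
  -- a uniform bound exp (-v n) ≤ M for integers n < A, and ≥ 1
  obtain ⟨M, hM1, hMb⟩ : ∃ M : ℝ, 1 ≤ M ∧ ∀ n : ℕ, (n : ℝ) < A → Real.exp (-v n) ≤ M := by
    obtain ⟨M₀, hM₀⟩ := Finset.exists_le ((Finset.range (⌈A⌉₊ + 1)).image
      fun k : ℕ => Real.exp (-v k))
    refine ⟨max M₀ 1, le_max_right _ _, fun n hn => ?_⟩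
    refine le_trans (hM₀ _ (Finset.mem_image_of_mem _ ?_)) (le_max_left _ _)
    rw [Finset.mem_range]
    have : (n:ℝ) ≤ (⌈A⌉₊:ℝ) := hn.le.trans (Nat.le_ceil A)
    have : n ≤ ⌈A⌉₊ := by exact_mod_cast this
    omega
  -- a linear bound exp (-v n) ≤ K * n for all integers n ≥ 1
  obtain ⟨K, hK0, hKb⟩ : ∃ K : ℝ, 0 ≤ K ∧ ∀ n : ℕ, 1 ≤ n → Real.exp (-v n) ≤ K * n := by
    refine ⟨max M (Real.exp (-v A)), le_trans (by linarith) (le_max_left _ _), fun n hn => ?_⟩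
    have hn0 : (0:ℝ) < n := by exact_mod_cast hn
    have hn1 : (1:ℝ) ≤ n := by exact_mod_cast hn
    rcases lt_or_ge ((n:ℝ)) A with h | h
    · calc Real.exp (-v n) ≤ M := hMb n h
        _ ≤ M * n := le_mul_of_one_le_right (by linarith) hn1
        _ ≤ max M (Real.exp (-v A)) * n := by
            have := le_max_left M (Real.exp (-v A)); nlinarith
    · have hb := hAv A n le_rfl h
      have hlogA : 0 ≤ Real.log A := Real.log_nonneg hA1
      have hlogn : 0 ≤ Real.log n := Real.log_nonneg hn1
      have h1 : -v n ≤ -v A + 2⁻¹ * Real.log n := by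
        have h2 : v A - v n ≤ 2⁻¹ * (Real.log n - Real.log A) := by
          have := abs_le.mp hb; linarith [this.2, abs_le.mp hb |>.1]
        nlinarith [abs_le.mp hb |>.1]
      calc Real.exp (-v n) ≤ Real.exp (-v A + 2⁻¹ * Real.log n) := Real.exp_le_exp.mpr h1
        _ = Real.exp (-v A) * (n:ℝ) ^ ((2:ℝ)⁻¹) := by
            rw [Real.exp_add, Real.rpow_def_of_pos hn0, mul_comm (Real.log _)]
        _ ≤ Real.exp (-v A) * (n:ℝ) ^ ((1:ℝ)) := by
            have := Real.rpow_le_rpow_of_exponent_le hn1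
              (show ((2:ℝ)⁻¹) ≤ 1 by norm_num)
            nlinarith [Real.exp_pos (-v A)]
        _ = Real.exp (-v A) * n := by rw [Real.rpow_one]
        _ ≤ max M (Real.exp (-v A)) * n := by
            have := le_max_right M (Real.exp (-v A)); nlinarith
  -- the step function
  set g : ℝ → ℝ → ℝ := fun μ x => ((⌈x⌉₊:ℝ)) ^ d * Real.exp (-(μ * (⌈x⌉₊:ℝ)) - v (⌈x⌉₊:ℝ))
    with hgdef
  have gmeas : ∀ μ : ℝ, Measurable (g μ) := by
    intro μ
    exact (measurable_from_nat
      (f := fun m : ℕ => ((m:ℝ)) ^ d * Real.exp (-(μ * (m:ℝ)) - v (m:ℝ)))).comp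
      Nat.measurable_ceil
  have Iexp : ∀ b s : ℝ, 0 < b → -1 < s →
      IntegrableOn (fun x : ℝ => x ^ s * Real.exp (-(b * x))) (Ioi 0) := by
    intro b s hb hs
    have := integrableOn_rpow_mul_exp_neg_mul_rpow (p := 1) hs one_pos hb
    simpa only [Real.rpow_one, neg_mul] using this
  have gint : ∀ μ : ℝ, 0 < μ → IntegrableOn (g μ) (Ioi 0) := by
    intro μ hμ
    have hexp : IntegrableOn (fun x : ℝ => Real.exp (-(μ * x))) (Ioi 0) := by
      simpa only [Real.rpow_zero, one_mul] using Iexp μ 0 hμ (by norm_num)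
    have hS : IntegrableOn (fun x : ℝ => K * 2 ^ (d+1) *
        (x ^ (d+1) * Real.exp (-(μ * x)) + Real.exp (-(μ * x)))) (Ioi 0) :=
      ((Iexp μ (d+1) hμ (by linarith)).add hexp).const_mul _
    refine Integrable.mono' hS ((gmeas μ).aestronglyMeasurable.restrict) ?_
    rw [ae_restrict_iff' measurableSet_Ioi]
    refine Eventually.of_forall fun x hx => ?_
    simp only [hgdef]
    set n : ℕ := ⌈x⌉₊ with hn
    have hn1 : 1 ≤ n := Nat.one_le_ceil_iff.mpr hx
    have hn0 : (0:ℝ) < n := by exact_mod_cast hn1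
    have hxn : x ≤ (n:ℝ) := Nat.le_ceil x
    have hnx : (n:ℝ) ≤ x + 1 := (Nat.ceil_lt_add_one hx.le).le
    have e1 : Real.exp (-(μ * (n:ℝ)) - v n) = Real.exp (-(μ * n)) * Real.exp (-v n) := by
      rw [← Real.exp_add]; ring_nf
    have b1 : Real.exp (-(μ * (n:ℝ))) ≤ Real.exp (-(μ * x)) :=
      Real.exp_le_exp.mpr (by nlinarith)
    have b2 : Real.exp (-v n) ≤ K * n := hKb n hn1
    have hnn : (0:ℝ) ≤ (n:ℝ) ^ d := Real.rpow_nonneg hn0.le d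
    calc ‖(n:ℝ) ^ d * Real.exp (-(μ * (n:ℝ)) - v n)‖
        = (n:ℝ) ^ d * (Real.exp (-(μ * n)) * Real.exp (-v n)) := by
          rw [Real.norm_eq_abs, abs_of_nonneg (mul_nonneg hnn (Real.exp_pos _).le), e1]
      _ ≤ (n:ℝ) ^ d * (Real.exp (-(μ * x)) * (K * n)) := by
          refine mul_le_mul_of_nonneg_left ?_ hnn
          exact mul_le_mul b1 b2 (Real.exp_pos _).le (Real.exp_pos _).le
      _ = K * ((n:ℝ) ^ (d+1) * Real.exp (-(μ * x))) := by
          rw [Real.rpow_add_one hn0.ne']; ring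
      _ ≤ K * ((x+1) ^ (d+1) * Real.exp (-(μ * x))) := by
          have h := Real.rpow_le_rpow hn0.le hnx (by linarith : (0:ℝ) ≤ d + 1)
          exact mul_le_mul_of_nonneg_left
            (mul_le_mul_of_nonneg_right h (Real.exp_pos _).le) hK0
      _ ≤ K * ((2 ^ (d+1) * (x ^ (d+1) + 1)) * Real.exp (-(μ * x))) := by
          have h := add_one_rpow_le hx.le (by linarith : (0:ℝ) ≤ d + 1)
          exact mul_le_mul_of_nonneg_left
            (mul_le_mul_of_nonneg_right h (Real.exp_pos _).le) hK0
      _ = K * 2 ^ (d+1) * (x ^ (d+1) * Real.exp (-(μ * x)) + Real.exp (-(μ * x))) := by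
          ring
  have hUnion : Ioi (0:ℝ) = ⋃ k : ℕ, Ioc ((k:ℝ)) ((k:ℝ)+1) := by
    ext x
    simp only [mem_Ioi, mem_iUnion, mem_Ioc]
    constructor
    · intro hx
      have h1 : 1 ≤ ⌈x⌉₊ := Nat.one_le_ceil_iff.mpr hx
      refine ⟨⌈x⌉₊ - 1, ?_, ?_⟩
      · have h2 := Nat.ceil_lt_add_one hx.le
        rw [Nat.cast_sub h1]
        push_cast
        linarith
      · have h3 := Nat.le_ceil x
        rw [Nat.cast_sub h1]
        push_cast
        linarith
    · rintro ⟨k, hk1, _⟩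
      exact lt_of_le_of_lt (Nat.cast_nonneg k) hk1
  have hdisj : Pairwise (Function.onFun Disjoint fun k : ℕ => Ioc ((k:ℝ)) ((k:ℝ)+1)) := by
    intro i j hij
    simp only [Function.onFun]
    rw [Set.Ioc_disjoint_Ioc]
    rcases hij.lt_or_gt with h | h
    · have hij' : (i:ℝ) + 1 ≤ (j:ℝ) := by exact_mod_cast h
      exact le_trans (min_le_left _ _) (le_trans hij' (le_max_right _ _))
    · have hij' : (j:ℝ) + 1 ≤ (i:ℝ) := by exact_mod_cast h
      exact le_trans (min_le_right _ _) (le_trans hij' (le_max_left _ _))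
  have gsum : ∀ μ : ℝ, 0 < μ → (∑' k : ℕ, ((k : ℝ) + 1) ^ d *
      Real.exp (-(μ * ((k : ℝ) + 1)) - v ((k : ℝ) + 1))) = ∫ x in Ioi 0, g μ x := by
    intro μ hμ
    have hval : ∀ k : ℕ, ∀ x ∈ Ioc ((k:ℝ)) ((k:ℝ)+1), g μ x
        = ((k:ℝ)+1) ^ d * Real.exp (-(μ * ((k:ℝ)+1)) - v ((k:ℝ)+1)) := by
      intro k x hx
      have hc : ⌈x⌉₊ = k + 1 := by
        rw [Nat.ceil_eq_iff (Nat.succ_ne_zero k)]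
        constructor
        · simpa using hx.1
        · push_cast
          exact hx.2
      simp only [hgdef, hc]
      push_cast
      ring_nf
    calc (∑' k : ℕ, ((k:ℝ)+1) ^ d * Real.exp (-(μ * ((k:ℝ)+1)) - v ((k:ℝ)+1)))
        = ∑' k : ℕ, ∫ x in Ioc ((k:ℝ)) ((k:ℝ)+1), g μ x := by
          refine tsum_congr fun k => ?_
          rw [setIntegral_congr_fun measurableSet_Ioc (hval k)]
          simp [Real.volume_Ioc]
      _ = ∫ x in ⋃ k : ℕ, Ioc ((k:ℝ)) ((k:ℝ)+1), g μ x := by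
          refine (integral_iUnion (fun k => measurableSet_Ioc) hdisj ?_).symm
          rw [← hUnion]
          exact gint μ hμ
      _ = ∫ x in Ioi 0, g μ x := by rw [← hUnion]
  set F : ℝ → ℝ → ℝ := fun μ t => (μ * (⌈t/μ⌉₊:ℝ)) ^ d * Real.exp (-(μ * (⌈t/μ⌉₊:ℝ))) *
      Real.exp (v (1/μ) - v (⌈t/μ⌉₊:ℝ)) with hFdef
  have key : ∀ μ : ℝ, 0 < μ → μ ^ (d + 1) * Real.exp (v (1 / μ)) * (∑' k : ℕ, ((k : ℝ) + 1) ^ d *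
      Real.exp (-(μ * ((k : ℝ) + 1)) - v ((k : ℝ) + 1))) = ∫ t in Ioi 0, F μ t := by
    intro μ hμ
    rw [gsum μ hμ]
    have h1 := integral_comp_mul_left_Ioi (g μ) 0 (inv_pos.mpr hμ)
    rw [mul_zero, inv_inv, smul_eq_mul] at h1
    have h2 : ∫ x in Ioi (0:ℝ), g μ x = μ⁻¹ * ∫ t in Ioi (0:ℝ), g μ (μ⁻¹ * t) := by
      rw [h1, ← mul_assoc, inv_mul_cancel₀ hμ.ne', one_mul]
    rw [h2, show μ ^ (d+1) * Real.exp (v (1/μ)) * (μ⁻¹ * ∫ t in Ioi (0:ℝ), g μ (μ⁻¹ * t)) =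
        (μ ^ d * Real.exp (v (1/μ))) * ∫ t in Ioi (0:ℝ), g μ (μ⁻¹ * t) by
      rw [Real.rpow_add_one hμ.ne']
      field_simp, ← integral_const_mul]
    refine setIntegral_congr_fun measurableSet_Ioi fun t ht => ?_
    have ht' : μ⁻¹ * t = t / μ := by rw [div_eq_inv_mul]
    simp only [hgdef, hFdef, ht']
    set n : ℕ := ⌈t/μ⌉₊ with hn
    calc μ ^ d * Real.exp (v (1/μ)) * ((n:ℝ) ^ d * Real.exp (-(μ * n) - v n))
        = μ ^ d * (n:ℝ) ^ d * (Real.exp (v (1/μ)) * Real.exp (-(μ * n) - v n)) := by ring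
      _ = μ ^ d * (n:ℝ) ^ d * (Real.exp (-(μ * n)) * Real.exp (v (1/μ) - v n)) := by
          rw [← Real.exp_add, ← Real.exp_add]
          congr 1
          ring
      _ = (μ * n) ^ d * Real.exp (-(μ * n)) * Real.exp (v (1/μ) - v n) := by
          rw [Real.mul_rpow hμ.le (Nat.cast_nonneg n)]
          ring
  have hFnonneg : ∀ μ t : ℝ, 0 < μ → 0 ≤ F μ t := fun μ t hμ => by
    simp only [hFdef]
    have h1 : (0:ℝ) ≤ μ * (⌈t/μ⌉₊:ℝ) := mul_nonneg hμ.le (Nat.cast_nonneg _)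
    exact mul_nonneg (mul_nonneg (Real.rpow_nonneg h1 d) (Real.exp_pos _).le)
      (Real.exp_pos _).le
  have main : Tendsto (fun μ => ∫ t in Ioi 0, F μ t) (nhdsWithin (0:ℝ) (Set.Ioi 0))
      (nhds (Real.Gamma (d + 1))) := by
    have hGamma : Real.Gamma (d+1) = ∫ t in Ioi (0:ℝ), Real.exp (-t) * t ^ d := by
      rw [Real.Gamma_eq_integral (by linarith : (0:ℝ) < d + 1)]
      norm_num
    rw [hGamma]
    set CB : ℝ := M * Real.exp (v A) * A ^ ((2:ℝ)⁻¹) + 1 with hCBdef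
    have hCB1 : 1 ≤ CB := by
      rw [hCBdef]
      have h1 : (0:ℝ) ≤ M * Real.exp (v A) * A ^ ((2:ℝ)⁻¹) :=
        mul_nonneg (mul_nonneg (by linarith) (Real.exp_pos _).le)
          (Real.rpow_nonneg hA0.le _)
      linarith
    have hCB0 : 0 ≤ CB := by linarith
    set G : ℝ → ℝ := fun t => CB * ((t+1) ^ (d+1) * Real.exp (-t) * (1 + t ^ (-(2:ℝ)⁻¹)))
      with hGdef
    -- integrability of the dominating function
    have hGint : Integrable G (volume.restrict (Ioi 0)) := by
      have Is : ∀ s : ℝ, -1 < s →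
          IntegrableOn (fun t : ℝ => t ^ s * Real.exp (-t)) (Ioi 0) := fun s hs => by
        simpa only [one_mul] using Iexp 1 s one_pos hs
      have I0 : IntegrableOn (fun t : ℝ => Real.exp (-t)) (Ioi 0) := by
        simpa only [Real.rpow_zero, one_mul] using Iexp 1 0 one_pos (by norm_num)
      have hS : IntegrableOn (fun t : ℝ => CB * 2 ^ (d+1) *
          ((t ^ (d+1) * Real.exp (-t) + Real.exp (-t)) +
            (t ^ (d + (2:ℝ)⁻¹) * Real.exp (-t) + t ^ (-(2:ℝ)⁻¹) * Real.exp (-t))))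
          (Ioi 0) := by
        refine Integrable.const_mul ?_ _
        exact ((Is (d+1) (by linarith)).add I0).add
          ((Is (d + (2:ℝ)⁻¹) (by linarith)).add (Is (-(2:ℝ)⁻¹) (by norm_num)))
      refine Integrable.mono' hS ?_ ?_
      · refine ContinuousOn.aestronglyMeasurable (fun t ht => ?_) measurableSet_Ioi
        have ht0 : (0:ℝ) < t := ht
        refine ContinuousAt.continuousWithinAt ?_
        refine continuousAt_const.mul (ContinuousAt.mul (ContinuousAt.mul ?_ ?_) ?_)
        · exact (continuousAt_id.add continuousAt_const).rpow_const
            (Or.inr (by linarith : (0:ℝ) ≤ d + 1))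
        · exact (Real.continuous_exp.comp continuous_neg).continuousAt
        · exact continuousAt_const.add (continuousAt_id.rpow_const (Or.inl ht0.ne'))
      · rw [ae_restrict_iff' measurableSet_Ioi]
        refine Eventually.of_forall fun t ht => ?_
        have ht0 : (0:ℝ) < t := ht
        have hu : (0:ℝ) ≤ t ^ (-(2:ℝ)⁻¹) := Real.rpow_nonneg ht.le _
        have hGnn : 0 ≤ G t := by
          simp only [hGdef]
          have h1 : (0:ℝ) ≤ (t+1) ^ (d+1) := Real.rpow_nonneg (by linarith [ht0]) _
          exact mul_nonneg hCB0 (mul_nonneg (mul_nonneg h1 (Real.exp_pos _).le)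
            (by positivity))
        have h := add_one_rpow_le ht.le (by linarith : (0:ℝ) ≤ d + 1)
        have hrw : t ^ (d + (2:ℝ)⁻¹) = t ^ (d+1) * t ^ (-(2:ℝ)⁻¹) := by
          rw [show (d + (2:ℝ)⁻¹) = (d+1) + (-(2:ℝ)⁻¹) by ring, Real.rpow_add ht]
        calc ‖G t‖ = CB * ((t+1) ^ (d+1) * Real.exp (-t) * (1 + t ^ (-(2:ℝ)⁻¹))) := by
              rw [Real.norm_eq_abs, abs_of_nonneg hGnn]
          _ ≤ CB * ((2 ^ (d+1) * (t ^ (d+1) + 1)) * Real.exp (-t) * (1 + t ^ (-(2:ℝ)⁻¹))) := by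
              refine mul_le_mul_of_nonneg_left ?_ hCB0
              refine mul_le_mul_of_nonneg_right
                (mul_le_mul_of_nonneg_right h (Real.exp_pos _).le) (by positivity)
          _ = CB * 2 ^ (d+1) * ((t ^ (d+1) * Real.exp (-t) + Real.exp (-t)) +
                (t ^ (d + (2:ℝ)⁻¹) * Real.exp (-t) + t ^ (-(2:ℝ)⁻¹) * Real.exp (-t))) := by
              rw [hrw]
              ring
    -- the uniform bound
    have hbound : ∀ μ : ℝ, 0 < μ → μ ≤ A⁻¹ → ∀ t : ℝ, 0 < t → F μ t ≤ G t := by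
      intro μ hμ0 hμA t ht
      have hμ1 : μ ≤ 1 := hμA.trans (inv_le_one_of_one_le₀ hA1)
      have htμ : 0 < t / μ := div_pos ht hμ0
      set n : ℕ := ⌈t/μ⌉₊ with hn
      have hn1 : 1 ≤ n := Nat.one_le_ceil_iff.mpr htμ
      have hn0 : (0:ℝ) < n := by exact_mod_cast hn1
      have hxt : t ≤ μ * n := by
        have := Nat.le_ceil (t/μ)
        rw [div_le_iff₀ hμ0] at this
        linarith [this]
      have hxt1 : μ * n < t + 1 := by
        have h := Nat.ceil_lt_add_one htμ.le
        have h2 := mul_lt_mul_of_pos_left h hμ0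
        have h3 : μ * (t/μ + 1) = t + μ := by field_simp
        rw [h3] at h2
        linarith
      have hx0 : 0 < μ * n := mul_pos hμ0 hn0
      have hAinv : A ≤ 1/μ := by
        have h := inv_anti₀ hμ0 hμA
        rw [inv_inv] at h
        rw [one_div]
        exact h
      have c1 : (μ * n) ^ d ≤ (t+1) ^ d := Real.rpow_le_rpow hx0.le (by linarith) hd
      have c2 : Real.exp (-(μ * n)) ≤ Real.exp (-t) := Real.exp_le_exp.mpr (by linarith)
      have hGt : G t = CB * ((t+1) ^ (d+1) * Real.exp (-t) * (1 + t ^ (-(2:ℝ)⁻¹))) := by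
        rw [hGdef]
      have hu : (0:ℝ) ≤ t ^ (-(2:ℝ)⁻¹) := Real.rpow_nonneg ht.le _
      have hdd : (t+1) ^ d ≤ (t+1) ^ (d+1) :=
        Real.rpow_le_rpow_of_exponent_le (by linarith) (by linarith)
      have hde : (t+1) ^ (d+1) = (t+1) ^ d * (t+1) := Real.rpow_add_one (by linarith) d
      have epos := (Real.exp_pos (-t)).le
      have hp1 : (0:ℝ) ≤ (t+1) ^ d := Real.rpow_nonneg (by linarith) _
      have hp2 : (0:ℝ) ≤ (t+1) ^ (d+1) := Real.rpow_nonneg (by linarith) _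
      rcases le_or_gt A ((n:ℝ)) with hcase | hcase
      · -- large n : use slow variation
        have hlog := vdiff_bound v (by norm_num : (0:ℝ) ≤ 2⁻¹) hμ0 hn0 hAv hAinv hcase
        have c3 : Real.exp (v (1/μ) - v n) ≤ (μ*n) ^ ((2:ℝ)⁻¹) + (μ*n) ^ (-(2:ℝ)⁻¹) := by
          refine le_trans ?_ (exp_half_abs_log_le hx0)
          exact Real.exp_le_exp.mpr (le_trans (le_abs_self _) hlog)
        have c4 : (μ*n) ^ ((2:ℝ)⁻¹) ≤ t + 1 := by
          calc (μ*n) ^ ((2:ℝ)⁻¹) ≤ (t+1) ^ ((2:ℝ)⁻¹) :=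
                Real.rpow_le_rpow hx0.le (by linarith) (by norm_num)
            _ ≤ (t+1) ^ (1:ℝ) :=
                Real.rpow_le_rpow_of_exponent_le (by linarith) (by norm_num)
            _ = t + 1 := Real.rpow_one _
        have c5 : (μ*n) ^ (-(2:ℝ)⁻¹) ≤ t ^ (-(2:ℝ)⁻¹) :=
          Real.rpow_le_rpow_of_nonpos ht hxt (by norm_num)
        have hF : F μ t ≤ (t+1) ^ d * Real.exp (-t) * ((t+1) + t ^ (-(2:ℝ)⁻¹)) := by
          simp only [hFdef]
          refine mul_le_mul ?_ (c3.trans (add_le_add c4 c5)) (Real.exp_pos _).le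
            (by positivity)
          exact mul_le_mul c1 c2 (Real.exp_pos _).le hp1
        refine hF.trans ?_
        rw [hGt]
        have hkey : (t+1) ^ d * Real.exp (-t) * t ^ (-(2:ℝ)⁻¹) ≤
            (t+1) ^ (d+1) * Real.exp (-t) * t ^ (-(2:ℝ)⁻¹) := by
          exact mul_le_mul_of_nonneg_right (mul_le_mul_of_nonneg_right hdd epos) hu
        nlinarith [mul_nonneg (mul_nonneg hp2 epos) hu, mul_nonneg hp2 epos,
          mul_nonneg (sub_nonneg.mpr hCB1)
            (by positivity : (0:ℝ) ≤ (t+1) ^ (d+1) * Real.exp (-t) * (1 + t ^ (-(2:ℝ)⁻¹)))]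
      · -- small n : use the finite bound
        have hm : Real.exp (-v n) ≤ M := hMb n hcase
        have hvA := hAv A (1/μ) le_rfl hAinv
        have hlogA : 0 ≤ Real.log A := Real.log_nonneg hA1
        have h1 : v (1/μ) ≤ v A + 2⁻¹ * Real.log (1/μ) := by
          have h2 := (abs_le.mp hvA).2
          linarith
        have h2 : Real.exp (v (1/μ)) ≤ Real.exp (v A) * μ ^ (-(2:ℝ)⁻¹) := by
          have h3 : Real.exp (2⁻¹ * Real.log (1/μ)) = μ ^ (-(2:ℝ)⁻¹) := by
            rw [one_div, Real.log_inv, Real.rpow_def_of_pos hμ0]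
            congr 1
            ring
          rw [← h3, ← Real.exp_add]
          exact Real.exp_le_exp.mpr h1
        have h3 : t < μ * A := by nlinarith
        have h4 : μ ^ (-(2:ℝ)⁻¹) ≤ A ^ ((2:ℝ)⁻¹) * t ^ (-(2:ℝ)⁻¹) := by
          have ht' : t / A < μ := by
            rw [div_lt_iff₀ hA0]
            nlinarith
          calc μ ^ (-(2:ℝ)⁻¹) ≤ (t / A) ^ (-(2:ℝ)⁻¹) :=
                Real.rpow_le_rpow_of_nonpos (div_pos ht hA0) ht'.le (by norm_num)
            _ = A ^ ((2:ℝ)⁻¹) * t ^ (-(2:ℝ)⁻¹) := by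
                rw [Real.div_rpow ht.le hA0.le, Real.rpow_neg hA0.le, div_eq_mul_inv,
                  inv_inv]
                ring
        have hμnn : (0:ℝ) ≤ μ ^ (-(2:ℝ)⁻¹) := Real.rpow_nonneg hμ0.le _
        have c3 : Real.exp (v (1/μ) - v n) ≤ M * Real.exp (v A) * A ^ ((2:ℝ)⁻¹) *
            t ^ (-(2:ℝ)⁻¹) := by
          rw [sub_eq_add_neg, Real.exp_add]
          calc Real.exp (v (1/μ)) * Real.exp (-v n)
              ≤ (Real.exp (v A) * μ ^ (-(2:ℝ)⁻¹)) * M :=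
                mul_le_mul h2 hm (Real.exp_pos _).le (by positivity)
            _ ≤ M * Real.exp (v A) * A ^ ((2:ℝ)⁻¹) * t ^ (-(2:ℝ)⁻¹) := by
                nlinarith [mul_le_mul_of_nonneg_left h4
                  (mul_nonneg (le_trans zero_le_one hM1) (Real.exp_pos (v A)).le)]
        have hF : F μ t ≤ (t+1) ^ d * Real.exp (-t) *
            (M * Real.exp (v A) * A ^ ((2:ℝ)⁻¹) * t ^ (-(2:ℝ)⁻¹)) := by
          simp only [hFdef]
          refine mul_le_mul ?_ c3 (Real.exp_pos _).le (by positivity)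
          exact mul_le_mul c1 c2 (Real.exp_pos _).le hp1
        refine hF.trans ?_
        rw [hGt]
        have hMe : (0:ℝ) ≤ M * Real.exp (v A) * A ^ ((2:ℝ)⁻¹) := by positivity
        have hkey : (t+1) ^ d * Real.exp (-t) * t ^ (-(2:ℝ)⁻¹) ≤
            (t+1) ^ (d+1) * Real.exp (-t) * (1 + t ^ (-(2:ℝ)⁻¹)) := by
          nlinarith [mul_le_mul_of_nonneg_right (mul_le_mul_of_nonneg_right hdd epos) hu,
            mul_nonneg hp2 epos]
        calc (t+1) ^ d * Real.exp (-t) * (M * Real.exp (v A) * A ^ ((2:ℝ)⁻¹) * t ^ (-(2:ℝ)⁻¹))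
            = (M * Real.exp (v A) * A ^ ((2:ℝ)⁻¹)) *
              ((t+1) ^ d * Real.exp (-t) * t ^ (-(2:ℝ)⁻¹)) := by ring
          _ ≤ (M * Real.exp (v A) * A ^ ((2:ℝ)⁻¹)) *
              ((t+1) ^ (d+1) * Real.exp (-t) * (1 + t ^ (-(2:ℝ)⁻¹))) :=
              mul_le_mul_of_nonneg_left hkey hMe
          _ ≤ CB * ((t+1) ^ (d+1) * Real.exp (-t) * (1 + t ^ (-(2:ℝ)⁻¹))) := by
              refine mul_le_mul_of_nonneg_right (by rw [hCBdef]; linarith) (by positivity)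
    -- pointwise convergence
    have hxten : ∀ t : ℝ, 0 < t →
        Tendsto (fun μ : ℝ => μ * (⌈t/μ⌉₊:ℝ)) (nhdsWithin 0 (Set.Ioi 0)) (nhds t) := by
      intro t ht
      have hup : Tendsto (fun μ : ℝ => t + μ) (nhdsWithin 0 (Set.Ioi 0)) (nhds t) := by
        have h0 : Tendsto (fun μ : ℝ => μ) (nhdsWithin 0 (Set.Ioi 0)) (nhds 0) :=
          tendsto_id.mono_left nhdsWithin_le_nhds
        simpa using h0.const_add t
      refine tendsto_of_tendsto_of_tendsto_of_le_of_le' tendsto_const_nhds hup ?_ ?_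
      · filter_upwards [self_mem_nhdsWithin] with μ hμ
        have := Nat.le_ceil (t/μ)
        rw [div_le_iff₀ (mem_Ioi.mp hμ)] at this
        linarith
      · filter_upwards [self_mem_nhdsWithin] with μ hμ
        have hμ0 : (0:ℝ) < μ := hμ
        have h := Nat.ceil_lt_add_one (div_pos ht hμ0).le
        have h2 := mul_lt_mul_of_pos_left h hμ0
        have h3 : μ * (t/μ + 1) = t + μ := by field_simp
        rw [h3] at h2
        linarith
    have hvlim : ∀ t : ℝ, 0 < t →
        Tendsto (fun μ : ℝ => v (1/μ) - v (⌈t/μ⌉₊:ℝ)) (nhdsWithin 0 (Set.Ioi 0)) (nhds 0) := by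
      intro t ht
      rw [Metric.tendsto_nhds]
      intro ε hε
      have hden : (0:ℝ) < |Real.log t| + 1 := by positivity
      obtain ⟨A', hA'1, hA'v⟩ := v_reg v hdiff hv
        (show (0:ℝ) < ε / (2 * (|Real.log t| + 1)) by positivity)
      have hA'0 : (0:ℝ) < A' := lt_of_lt_of_le zero_lt_one hA'1
      have hlx : Tendsto (fun μ : ℝ => |Real.log (μ * (⌈t/μ⌉₊:ℝ))|)
          (nhdsWithin 0 (Set.Ioi 0)) (nhds |Real.log t|) :=
        (((Real.continuousAt_log ht.ne').tendsto.comp (hxten t ht)).abs)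
      have hev1 : ∀ᶠ μ : ℝ in nhdsWithin 0 (Set.Ioi 0),
          |Real.log (μ * (⌈t/μ⌉₊:ℝ))| < |Real.log t| + 1 :=
        hlx.eventually_lt_const (by linarith)
      have hδ : (0:ℝ) < min (t/A') A'⁻¹ := lt_min (div_pos ht hA'0) (inv_pos.mpr hA'0)
      filter_upwards [hev1, Ioc_mem_nhdsGT hδ] with μ hlog hμm
      obtain ⟨hμ0, hμle⟩ := hμm
      have hμ0' : (0:ℝ) < μ := hμ0
      set n : ℕ := ⌈t/μ⌉₊ with hn
      have hn1 : 1 ≤ n := Nat.one_le_ceil_iff.mpr (div_pos ht hμ0')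
      have hn0 : (0:ℝ) < n := by exact_mod_cast hn1
      have hA'inv : A' ≤ 1/μ := by
        have h := inv_anti₀ hμ0' (hμle.trans (min_le_right _ _))
        rw [inv_inv] at h
        rw [one_div]
        exact h
      have hA'n : A' ≤ (n:ℝ) := by
        have h1 : μ ≤ t / A' := hμle.trans (min_le_left _ _)
        have h2 : A' ≤ t / μ := by
          rw [le_div_iff₀ hμ0']
          rw [le_div_iff₀ hA'0] at h1
          linarith
        exact h2.trans (Nat.le_ceil (t/μ))
      have hb := vdiff_bound v (by positivity) hμ0' hn0 hA'v hA'inv hA'n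
      rw [Real.dist_eq, sub_zero]
      calc |v (1/μ) - v (n:ℝ)| ≤ (ε / (2 * (|Real.log t| + 1))) * |Real.log (μ * n)| := hb
        _ ≤ (ε / (2 * (|Real.log t| + 1))) * (|Real.log t| + 1) := by
            refine mul_le_mul_of_nonneg_left hlog.le (by positivity)
        _ = ε / 2 := by
            field_simp
        _ < ε := by linarith
    -- apply dominated convergence
    refine MeasureTheory.tendsto_integral_filter_of_dominated_convergence G ?_ ?_ hGint ?_
    · filter_upwards [self_mem_nhdsWithin] with μ hμ
      refine Measurable.aestronglyMeasurable ?_ |>.restrict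
      have : Measurable fun t : ℝ => (⌈t/μ⌉₊ : ℕ) :=
        Nat.measurable_ceil.comp (measurable_id.div_const μ)
      exact (measurable_from_nat (f := fun m : ℕ => (μ * (m:ℝ)) ^ d *
        Real.exp (-(μ * (m:ℝ))) * Real.exp (v (1/μ) - v (m:ℝ)))).comp this
    · filter_upwards [Ioc_mem_nhdsGT (inv_pos.mpr hA0)] with μ hμ
      rw [ae_restrict_iff' measurableSet_Ioi]
      refine Eventually.of_forall fun t ht => ?_
      rw [Real.norm_eq_abs, abs_of_nonneg (hFnonneg μ t hμ.1)]
      exact hbound μ hμ.1 hμ.2 t ht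
    · rw [ae_restrict_iff' measurableSet_Ioi]
      refine Eventually.of_forall fun t ht => ?_
      have h1 : Tendsto (fun μ : ℝ => (μ * (⌈t/μ⌉₊:ℝ)) ^ d * Real.exp (-(μ * (⌈t/μ⌉₊:ℝ))))
          (nhdsWithin 0 (Set.Ioi 0)) (nhds (t ^ d * Real.exp (-t))) :=
        ((hxten t ht).rpow_const (Or.inl ht.ne')).mul
          ((Real.continuous_exp.tendsto _).comp (hxten t ht).neg)
      have h2 : Tendsto (fun μ : ℝ => Real.exp (v (1/μ) - v (⌈t/μ⌉₊:ℝ)))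
          (nhdsWithin 0 (Set.Ioi 0)) (nhds 1) := by
        have := (Real.continuous_exp.tendsto _).comp (hvlim t ht)
        simpa [Function.comp_def] using this
      have h3 := h1.mul h2
      rw [mul_one] at h3
      simp only [hFdef]
      convert h3 using 2
      ring
  refine main.congr' ?_
  filter_upwards [self_mem_nhdsWithin] with μ hμ
  exact (key μ hμ).symm
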